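/- Fix a β-sequence [·]_β and let Δ_β : ℂ[x] → ℂ[x,y] be the ℂ-linear map with Δ_β(x^n) = Σ_{k=0}^n ([n]_β!/([k]_β!·[n−k]_β!)) x^k y^{n−k}. Let (P_n)_{n≥0} be an admissible polynomial sequence with β-generating function H(x,z) = Σ_{n≥0} (1/[n]_β!) P_n(x) z^n. Then the following are equivalent: (i) for every n ≥ 0, Δ_β(P_n) = Σ_{k=0}^n ([n]_β!/([k]_β!·[n−k]_β!)) P_k(x) P_{n−k}(y) in ℂ[x,y]; (ii) there exists u ∈ 𝒫₀,₁ such that H(x,z) = exp_β(u(z)x), i.e. Σ_{n≥0} (1/[n]_β!) P_n(x) z^n = Σ_{k≥0} (1/[k]_β!) x^k u(z)^k in ℂ[x][[z]]. -/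

import Mathlib

open Polynomial Finset

namespace S12
noncomputable def sg (i l : ℕ) : Fin 2 →₀ ℕ := Finsupp.single 0 i + Finsupp.single 1 l

lemma sg_eq_iff {i l i' l' : ℕ} : sg i l = sg i' l' ↔ i = i' ∧ l = l' := by
  constructor
  · intro h
    have h0 := DFunLike.congr_fun h (0 : Fin 2)
    have h1 := DFunLike.congr_fun h (1 : Fin 2)
    simp [sg, Finsupp.single_apply] at h0 h1
    exact ⟨h0, h1⟩
  · rintro ⟨rfl, rfl⟩; rfl

lemma coeff_xy (i l a b : ℕ) :
    MvPolynomial.coeff (sg i l)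
      ((MvPolynomial.X (0:Fin 2))^a * (MvPolynomial.X 1)^b : MvPolynomial (Fin 2) ℂ)
      = if a = i ∧ b = l then 1 else 0 := by
  rw [MvPolynomial.X_pow_eq_monomial, MvPolynomial.X_pow_eq_monomial,
    MvPolynomial.monomial_mul, MvPolynomial.coeff_monomial]
  rw [show (Finsupp.single (0:Fin 2) a + Finsupp.single 1 b) = sg a b from rfl]
  simp [sg_eq_iff]

lemma mv_ext_iff (p q : MvPolynomial (Fin 2) ℂ) :
    p = q ↔ ∀ i l : ℕ, MvPolynomial.coeff (sg i l) p = MvPolynomial.coeff (sg i l) q := by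
  constructor
  · rintro rfl _ _; rfl
  · intro h
    apply MvPolynomial.ext
    intro d
    have hd : d = sg (d 0) (d 1) := by
      ext j
      fin_cases j <;> simp [sg, Finsupp.single_apply]
    rw [hd]; exact h _ _

lemma collapse1 (n i l : ℕ) (f : ℕ → ℕ → ℂ) :
    (∑ j ∈ range (n+1), ∑ i' ∈ range (j+1),
        f j i' * (if i' = i ∧ j - i' = l then 1 else 0))
      = if i + l ≤ n then f (i+l) i else 0 := by
  have step1 : ∀ j ∈ range (n+1),
      (∑ i' ∈ range (j+1), f j i' * (if i' = i ∧ j - i' = l then 1 else 0))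
        = if j = i + l then f j i else 0 := by
    intro j _
    have h : ∀ i' ∈ range (j+1),
        f j i' * (if i' = i ∧ j - i' = l then 1 else 0)
          = if i' = i then (if j = i + l then f j i' else 0) else 0 := by
      intro i' hi'
      rw [Finset.mem_range, Nat.lt_succ_iff] at hi'
      split_ifs with h1 h2 h3 <;> first
        | (simp_all; omega)
        | simp_all
    rw [Finset.sum_congr rfl h, Finset.sum_ite_eq' (range (j+1)) i]
    split_ifs with hm hj hj <;> try rfl
    · rw [Finset.mem_range, Nat.lt_succ_iff] at hm; omega
  rw [Finset.sum_congr rfl step1, Finset.sum_ite_eq' (range (n+1)) (i+l)]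
  simp [Nat.lt_succ_iff]

lemma collapse2 (k m i l : ℕ) (g : ℕ → ℕ → ℂ) :
    (∑ i' ∈ range (k+1), ∑ l' ∈ range (m+1),
        g i' l' * (if i' = i ∧ l' = l then 1 else 0))
      = if i ≤ k ∧ l ≤ m then g i l else 0 := by
  have h : ∀ i' ∈ range (k+1), ∀ l' ∈ range (m+1),
      g i' l' * (if i' = i ∧ l' = l then 1 else 0)
        = if i' = i then (if l' = l then g i' l' else 0) else 0 := by
    intro i' _ l' _
    split_ifs <;> simp_all
  calc (∑ i' ∈ range (k+1), ∑ l' ∈ range (m+1),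
        g i' l' * (if i' = i ∧ l' = l then 1 else 0))
      = ∑ i' ∈ range (k+1), if i' = i then
          (∑ l' ∈ range (m+1), if l' = l then g i' l' else 0) else 0 := by
        apply Finset.sum_congr rfl
        intro i' hi'
        rw [Finset.sum_congr rfl (h i' hi')]
        split_ifs <;> simp
    _ = _ := by
        rw [Finset.sum_ite_eq' (range (k+1)) i]
        by_cases h1 : i ≤ k <;> by_cases h2 : l ≤ m <;>
          simp [Nat.lt_succ_iff, h1, h2, Finset.sum_ite_eq' (range (m+1)) l]

lemma pow_coeff_van {u : PowerSeries ℂ} (hu0 : PowerSeries.constantCoeff (R := ℂ) u = 0) :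
    ∀ m n : ℕ, n < m → PowerSeries.coeff (R := ℂ) n (u ^ m) = 0 := by
  intro m
  induction m with
  | zero => intro n hn; omega
  | succ m ih =>
    intro n hn
    rw [pow_succ, PowerSeries.coeff_mul, Finset.Nat.sum_antidiagonal_eq_sum_range_succ_mk]
    apply Finset.sum_eq_zero
    intro j hj
    rw [Finset.mem_range, Nat.lt_succ_iff] at hj
    by_cases hq : j = n
    · subst hq
      have h0 : PowerSeries.coeff (R := ℂ) 0 u = 0 := by
        simpa [PowerSeries.coeff_zero_eq_constantCoeff] using hu0
      simp only [Nat.sub_self, h0, mul_zero]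
    · have : j < m := by omega
      rw [ih j this, zero_mul]

end S12
open S12

/-- The β-factorial `[n]_β! = ∏_{i=1}^n [i]_β`. -/
noncomputable def betaFact (β : ℕ → ℝ) (n : ℕ) : ℝ := ∏ i ∈ Finset.range n, β (i + 1)

/-- an admissible polynomial sequence satisfies the β-binomial identity
`Δ_β(P_n) = Σ_k ([n]!/([k]![n−k]!)) P_k(x) P_{n−k}(y)` for all `n` if and only if its
β-generating function has the form `exp_β(u(z)x)` for some `u ∈ 𝒫₀,₁`. -/
theorem stmt_12 (β : ℕ → ℝ) (hβ0 : β 0 = 0) (hβ1 : β 1 = 1) (hβpos : ∀ n, 1 ≤ n → 0 < β n)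
    (P : ℕ → Polynomial ℂ)
    (hmonic : ∀ n, (P n).Monic) (hdeg : ∀ n, (P n).natDegree = n)
    (hzero : ∀ n, 1 ≤ n → (P n).coeff 0 = 0)
    (Δ : Polynomial ℂ →ₗ[ℂ] MvPolynomial (Fin 2) ℂ)
    (hΔ : ∀ n : ℕ, Δ (Polynomial.X ^ n) =
      ∑ k ∈ Finset.range (n + 1),
        ((betaFact β n / (betaFact β k * betaFact β (n - k)) : ℝ) : ℂ) •
          (MvPolynomial.X (0 : Fin 2) ^ k * MvPolynomial.X (1 : Fin 2) ^ (n - k))) :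
    (∀ n : ℕ, Δ (P n) =
      ∑ k ∈ Finset.range (n + 1),
        ((betaFact β n / (betaFact β k * betaFact β (n - k)) : ℝ) : ℂ) •
          (Polynomial.aeval (MvPolynomial.X (0 : Fin 2) : MvPolynomial (Fin 2) ℂ) (P k) *
            Polynomial.aeval (MvPolynomial.X (1 : Fin 2) : MvPolynomial (Fin 2) ℂ) (P (n - k))))
    ↔
    (∃ u : PowerSeries ℂ,
      PowerSeries.constantCoeff (R := ℂ) u = 0 ∧ PowerSeries.coeff (R := ℂ) 1 u = 1 ∧
      ∀ n : ℕ, ((betaFact β n : ℂ))⁻¹ • P n =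
        ∑ k ∈ Finset.range (n + 1),
          ((betaFact β k : ℂ))⁻¹ •
            (Polynomial.C (PowerSeries.coeff (R := ℂ) n (u ^ k)) * Polynomial.X ^ k)) := by
  classical
  set c : ℕ → ℂ := fun n => ((betaFact β n : ℝ) : ℂ) with hc
  have hcpos : ∀ n, 0 < betaFact β n := fun n =>
    Finset.prod_pos (fun i _ => hβpos (i+1) le_add_self)
  have hcne : ∀ n, c n ≠ 0 := fun n => by
    simp only [hc, ne_eq, Complex.ofReal_eq_zero]
    exact ne_of_gt (hcpos n)
  have hc0 : c 0 = 1 := by simp [hc, betaFact]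
  set a : ℕ → ℕ → ℂ := fun n k => (P n).coeff k with ha
  set Cc : ℕ → ℕ → ℂ :=
    fun n k => ((betaFact β n / (betaFact β k * betaFact β (n - k)) : ℝ) : ℂ) with hCc
  have hCc' : ∀ n k, Cc n k = c n / (c k * c (n-k)) := by
    intro n k; simp only [hCc, hc]; push_cast; ring
  have hann : ∀ n, a n n = 1 := by
    intro n
    have h := hmonic n
    rw [Polynomial.Monic, Polynomial.leadingCoeff, hdeg n] at h
    exact h
  have havan : ∀ n k, n < k → a n k = 0 := fun n k h =>
    Polynomial.coeff_eq_zero_of_natDegree_lt (by rw [hdeg]; exact h)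
  have hP0 : P 0 = 1 := (hmonic 0).natDegree_eq_zero.mp (hdeg 0)
  have hsum : ∀ m, P m = ∑ j ∈ range (m+1), a m j • (Polynomial.X ^ j) := by
    intro m
    conv_lhs => rw [(P m).as_sum_range' (m+1) (by rw [hdeg]; omega)]
    exact Finset.sum_congr rfl fun j _ => (Polynomial.smul_X_eq_monomial).symm
  -- A-coefficients
  set A : ℕ → ℕ → ℂ := fun n k => a n k * c k / c n with hA
  have hAvan : ∀ n k, n < k → A n k = 0 := by
    intro n k h; simp [hA, havan n k h]
  have hA0 : ∀ n, A n 0 = if n = 0 then 1 else 0 := by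
    intro n
    rcases Nat.eq_zero_or_pos n with rfl | hn
    · simp [hA, hP0, ha, hc0]
    · have : a n 0 = 0 := hzero n hn
      simp [hA, this, Nat.pos_iff_ne_zero.mp hn]
  have hA01 : A 0 1 = 0 := hAvan 0 1 (by omega)
  have hA11 : A 1 1 = 1 := by
    simp [hA, hann 1, div_self (hcne 1)]
  -- coefficient of Δ (P m)
  have coeffD : ∀ m i l, MvPolynomial.coeff (sg i l) (Δ (P m)) = a m (i+l) * Cc (i+l) i := by
    intro m i l
    rw [hsum m, map_sum]
    simp only [map_smul, hΔ]
    rw [MvPolynomial.coeff_sum]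
    simp only [MvPolynomial.coeff_smul, MvPolynomial.coeff_sum, coeff_xy, smul_eq_mul,
      Finset.mul_sum, ← mul_assoc]
    rw [collapse1 m i l (fun j i' => a m j * Cc j i')]
    split_ifs with h
    · rfl
    · rw [havan m (i+l) (by omega), zero_mul]
  -- coefficient of the RHS sum
  have coeffR : ∀ n i l, MvPolynomial.coeff (sg i l)
      (∑ k ∈ Finset.range (n + 1), Cc n k •
        (Polynomial.aeval (MvPolynomial.X (0 : Fin 2) : MvPolynomial (Fin 2) ℂ) (P k) *
          Polynomial.aeval (MvPolynomial.X (1 : Fin 2) : MvPolynomial (Fin 2) ℂ) (P (n - k))))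
      = ∑ k ∈ range (n+1), Cc n k * (a k i * a (n-k) l) := by
    intro n i l
    rw [MvPolynomial.coeff_sum]
    apply Finset.sum_congr rfl
    intro k _
    rw [MvPolynomial.coeff_smul]
    have e1 : (Polynomial.aeval (MvPolynomial.X (0 : Fin 2) : MvPolynomial (Fin 2) ℂ)) (P k)
        = ∑ i' ∈ range (k+1), a k i' • (MvPolynomial.X (0:Fin 2)) ^ i' := by
      conv_lhs => rw [hsum k]
      rw [map_sum]
      simp [Polynomial.map_smul]
    have e2 : (Polynomial.aeval (MvPolynomial.X (1 : Fin 2) : MvPolynomial (Fin 2) ℂ)) (P (n-k))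
        = ∑ l' ∈ range (n-k+1), a (n-k) l' • (MvPolynomial.X (1:Fin 2)) ^ l' := by
      conv_lhs => rw [hsum (n-k)]
      rw [map_sum]
      simp [Polynomial.map_smul]
    rw [e1, e2, Finset.sum_mul_sum]
    simp only [smul_mul_smul_comm]
    rw [MvPolynomial.coeff_sum]
    simp only [MvPolynomial.coeff_sum, MvPolynomial.coeff_smul, coeff_xy, smul_eq_mul]
    rw [collapse2 k (n-k) i l (fun i' l' => a k i' * a (n-k) l')]
    split_ifs with h
    · rfl
    · rw [not_and_or] at h
      rcases h with h | h
      · rw [havan k i (by omega)]; ring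
      · rw [havan (n-k) l (by omega)]; ring
  -- scalar reformulation
  have key : (∀ n : ℕ, Δ (P n) =
      ∑ k ∈ Finset.range (n + 1), Cc n k •
        (Polynomial.aeval (MvPolynomial.X (0 : Fin 2) : MvPolynomial (Fin 2) ℂ) (P k) *
          Polynomial.aeval (MvPolynomial.X (1 : Fin 2) : MvPolynomial (Fin 2) ℂ) (P (n - k))))
      ↔ (∀ n i l : ℕ, A n (i+l) = ∑ k ∈ range (n+1), A k i * A (n-k) l) := by
    have hiff : ∀ n i l : ℕ,
        (a n (i+l) * Cc (i+l) i = ∑ k ∈ range (n+1), Cc n k * (a k i * a (n-k) l))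
        ↔ (A n (i+l) = ∑ k ∈ range (n+1), A k i * A (n-k) l) := by
      intro n i l
      have hci := hcne i
      have hcl := hcne l
      have hcn := hcne n
      have hL : a n (i+l) * Cc (i+l) i = (c n / (c i * c l)) * A n (i+l) := by
        rw [hCc', hA]
        have hil : (i+l) - i = l := by omega
        rw [hil]
        field_simp
      have hR : ∀ k ∈ range (n+1),
          Cc n k * (a k i * a (n-k) l) = (c n / (c i * c l)) * (A k i * A (n-k) l) := by
        intro k _
        have hck := hcne k
        have hcnk := hcne (n-k)
        rw [hCc', hA]
        field_simp
      rw [hL, Finset.sum_congr rfl hR, ← Finset.mul_sum]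
      exact mul_right_inj' (div_ne_zero (hcne n) (mul_ne_zero (hcne i) (hcne l)))
    constructor
    · intro h n i l
      have := (mv_ext_iff _ _).mp (h n) i l
      rw [coeffD, coeffR] at this
      exact (hiff n i l).mp this
    · intro h n
      rw [mv_ext_iff]
      intro i l
      rw [coeffD, coeffR]
      exact (hiff n i l).mpr (h n i l)
  rw [key]
  constructor
  · -- construct u
    intro hstar
    refine ⟨PowerSeries.mk (fun m => A m 1), ?_, ?_, ?_⟩
    · have : PowerSeries.constantCoeff (R := ℂ) (PowerSeries.mk fun m => A m 1) = A 0 1 := by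
        rw [← PowerSeries.coeff_zero_eq_constantCoeff, PowerSeries.coeff_mk]
      rw [this, hA01]
    · rw [PowerSeries.coeff_mk, hA11]
    · have hupow : ∀ k n : ℕ, PowerSeries.coeff (R := ℂ) n ((PowerSeries.mk fun m => A m 1) ^ k) = A n k := by
        intro k
        induction k with
        | zero =>
          intro n
          rw [pow_zero, PowerSeries.coeff_one, hA0]
        | succ k ih =>
          intro n
          rw [pow_succ, PowerSeries.coeff_mul,
            Finset.Nat.sum_antidiagonal_eq_sum_range_succ_mk]
          simp only [ih, PowerSeries.coeff_mk]
          exact (hstar n k 1).symm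
      intro n
      apply Polynomial.ext
      intro m
      rw [Polynomial.coeff_smul, Polynomial.finset_sum_coeff]
      simp only [Polynomial.coeff_smul, Polynomial.coeff_C_mul, Polynomial.coeff_X_pow,
        hupow, smul_eq_mul]
      have hterm : ∀ k ∈ range (n+1),
          (c k)⁻¹ * (A n k * if m = k then 1 else 0)
            = if k = m then (c k)⁻¹ * A n k else 0 := by
        intro k _
        by_cases h : k = m
        · subst h; rw [if_pos rfl, if_pos rfl, mul_one]
        · rw [if_neg (fun hh => h hh.symm), if_neg h, mul_zero, mul_zero]
      rw [Finset.sum_congr rfl hterm, Finset.sum_ite_eq' (range (n+1)) m]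
      by_cases hm : m ≤ n
      · rw [if_pos (by rw [Finset.mem_range]; omega)]
        have hcn := hcne n
        have hcm := hcne m
        rw [hA]
        field_simp
        simp only [hc, ha] at hcn ⊢
        exact mul_div_cancel_right₀ _ hcn
      · rw [if_neg (by rw [Finset.mem_range]; omega)]
        have hz : (P n).coeff m = 0 := havan n m (by omega)
        rw [hz, mul_zero]
  · rintro ⟨u, hu0, hu1, hrep⟩ n i l
    -- first: A n k = coeff n (u^k)
    have hAu : ∀ n k : ℕ, A n k = PowerSeries.coeff (R := ℂ) n (u ^ k) := by
      intro n k
      by_cases hk : k ≤ n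
      · have := congrArg (fun p => Polynomial.coeff p k) (hrep n)
        simp only [Polynomial.coeff_smul, Polynomial.finset_sum_coeff,
          Polynomial.coeff_C_mul, Polynomial.coeff_X_pow, smul_eq_mul] at this
        have hterm : ∀ k' ∈ range (n+1),
            (c k')⁻¹ * (PowerSeries.coeff (R := ℂ) n (u ^ k') * if k = k' then 1 else 0)
              = if k' = k then (c k')⁻¹ * PowerSeries.coeff (R := ℂ) n (u ^ k') else 0 := by
          intro k' _
          by_cases h : k' = k
          · subst h; rw [if_pos rfl, if_pos rfl, mul_one]
          · rw [if_neg (fun hh => h hh.symm), if_neg h, mul_zero, mul_zero]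
        rw [Finset.sum_congr rfl hterm, Finset.sum_ite_eq' (range (n+1)) k,
          if_pos (by rw [Finset.mem_range]; omega)] at this
        rw [hA]
        have hcn := hcne n
        have hck := hcne k
        field_simp at this ⊢
        rw [mul_comm] at this
        rw [← this]
        simp only [hc, ha] at hcn ⊢
        rw [div_mul_cancel₀ _ hcn]
      · rw [hAvan n k (by omega), pow_coeff_van hu0 k n (by omega)]
    simp only [hAu]
    rw [pow_add, PowerSeries.coeff_mul, Finset.Nat.sum_antidiagonal_eq_sum_range_succ_mk]
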